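/- Fix β > 0, x,y ∈ (0,1), and let δ = h_β(x,y). Then the dilogarithm identity holds: Li₂(e^{-β(1-x-y+δ)}) = π²/6 - β²(x-δ)(y-δ) - Li₂(e^{-βδ}) - Li₂(e^{-β(x-δ)}) - Li₂(e^{-β(y-δ)}) - Li₂(e^{-β}) + Li₂(e^{-βx}) + Li₂(e^{-βy}) + Li₂(e^{-β(1-x)}) + Li₂(e^{-β(1-y)}). In particular, a_β(x,y; h_β(x,y)) = 0. -/

import Mathlib

/-- The limiting height profile `h_β(x,y)` of the Mallows measure. -/
noncomputable def hFn (β x y : ℝ) : ℝ :=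
  (1 / β) * (Real.log (1 - Real.exp (-β)) -
    Real.log (Real.exp (-β * x) + Real.exp (-β * y) - Real.exp (-β * (x + y)) - Real.exp (-β)))

/-- The real dilogarithm `Li₂(x) = ∑_{n ≥ 1} xⁿ/n²`. -/
noncomputable def Li2 (x : ℝ) : ℝ := ∑' n : ℕ, x ^ (n + 1) / ((n : ℝ) + 1) ^ 2

/-- The large-deviation rate function `a_β(x,y;δ)` of the Mallows height function. -/
noncomputable def rateFn (β x y δ : ℝ) : ℝ :=
  (1 / β) * (β ^ 2 * (x - δ) * (y - δ) - Real.pi ^ 2 / 6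
    + Li2 (Real.exp (-β * δ)) + Li2 (Real.exp (-β * (x - δ)))
    + Li2 (Real.exp (-β * (y - δ))) + Li2 (Real.exp (-β * (1 - x - y + δ)))
    + Li2 (Real.exp (-β)) - Li2 (Real.exp (-β * x)) - Li2 (Real.exp (-β * y))
    - Li2 (Real.exp (-β * (1 - x))) - Li2 (Real.exp (-β * (1 - y))))

lemma li2_aux_summable : Summable (fun n : ℕ => 1 / ((n : ℝ) + 1) ^ 2) := by
  have h := (summable_nat_add_iff 1).mpr (Real.summable_one_div_nat_pow.mpr one_lt_two)
  refine h.congr fun n => ?_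
  push_cast
  ring

lemma li2_one : Li2 1 = Real.pi ^ 2 / 6 := by
  have h := hasSum_zeta_two
  have h2 : HasSum (fun n : ℕ => (1 : ℝ) / ((n : ℝ) + 1) ^ 2) (Real.pi ^ 2 / 6) := by
    have h3 := (hasSum_nat_add_iff (f := fun n : ℕ => (1 : ℝ) / (n : ℝ) ^ 2) 1).mpr
      (by simpa using h)
    refine h3.congr_fun fun n => ?_
    push_cast
    ring
  have h4 : HasSum (fun n : ℕ => (1:ℝ) ^ (n + 1) / ((n : ℝ) + 1) ^ 2) (Real.pi ^ 2 / 6) := by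
    refine h2.congr_fun fun n => ?_
    rw [one_pow]
  rw [Li2, h4.tsum_eq]

lemma li2_continuousOn : ContinuousOn Li2 (Set.Icc (-1 : ℝ) 1) := by
  show ContinuousOn (fun x : ℝ => ∑' n : ℕ, x ^ (n + 1) / ((n : ℝ) + 1) ^ 2) _
  refine continuousOn_tsum (fun i => ?_) li2_aux_summable (fun n x hx => ?_)
  · fun_prop
  · have hx1 : |x| ≤ 1 := abs_le.mpr ⟨hx.1, hx.2⟩
    have hn : (0:ℝ) < ((n : ℝ) + 1) ^ 2 := by positivity
    rw [Real.norm_eq_abs, abs_div, abs_of_pos hn, div_le_div_iff_of_pos_right hn, ← pow_abs]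
    exact pow_le_one₀ (abs_nonneg x) hx1

lemma li2_hasDerivAt {x : ℝ} (hx : |x| < 1) :
    HasDerivAt Li2 (∑' n : ℕ, x ^ n / ((n : ℝ) + 1)) x := by
  set r : ℝ := (|x| + 1) / 2 with hr
  have hr0 : 0 ≤ r := by positivity
  have hxr : |x| < r := by rw [hr]; linarith
  have hr1 : r < 1 := by rw [hr]; linarith
  show HasDerivAt (fun y : ℝ => ∑' n : ℕ, y ^ (n + 1) / ((n : ℝ) + 1) ^ 2) _ x
  refine hasDerivAt_tsum_of_isPreconnected (u := fun n : ℕ => r ^ n)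
    (g := fun (n : ℕ) (y : ℝ) => y ^ (n + 1) / ((n : ℝ) + 1) ^ 2)
    (g' := fun (n : ℕ) (y : ℝ) => y ^ n / ((n : ℝ) + 1))
    (t := Set.Ioo (-r) r) (y₀ := 0)
    (summable_geometric_of_lt_one hr0 hr1) isOpen_Ioo (convex_Ioo _ _).isPreconnected
    (fun n y _ => ?_) (fun n y hy => ?_) ?_ ?_ ?_
  · have h := (hasDerivAt_pow (n + 1) y).div_const (((n : ℝ) + 1) ^ 2)
    refine h.congr_deriv ?_
    have hn : ((n : ℝ) + 1) ≠ 0 := by positivity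
    push_cast
    field_simp
  · have hy1 : |y| ≤ r := le_of_lt (abs_lt.mpr ⟨hy.1, hy.2⟩)
    have hn : (1:ℝ) ≤ (n : ℝ) + 1 := by
      have := Nat.cast_nonneg (α := ℝ) n; linarith
    rw [Real.norm_eq_abs, abs_div, abs_of_pos (by positivity : (0:ℝ) < (n:ℝ)+1)]
    calc |y ^ n| / ((n : ℝ) + 1) ≤ |y ^ n| := div_le_self (abs_nonneg _) hn
      _ ≤ r ^ n := by rw [abs_pow]; exact pow_le_pow_left₀ (abs_nonneg y) hy1 n
  · exact Set.mem_Ioo.mpr ⟨by linarith [abs_nonneg x], by linarith [abs_nonneg x]⟩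
  · refine (summable_zero).congr fun n => ?_
    simp
  · exact Set.mem_Ioo.mpr (abs_lt.mp hxr)

lemma li2_hasDerivAt' {x : ℝ} (h0 : 0 < x) (h1 : x < 1) :
    HasDerivAt Li2 (-Real.log (1 - x) / x) x := by
  have hx : |x| < 1 := abs_lt.mpr ⟨by linarith, h1⟩
  have h := li2_hasDerivAt hx
  have hs := Real.hasSum_pow_div_log_of_abs_lt_one hx
  have hs2 := hs.mul_left x⁻¹
  have heq : (fun n : ℕ => x⁻¹ * (x ^ (n + 1) / (n + 1))) = fun n : ℕ => x ^ n / ((n : ℝ) + 1) := by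
    funext n
    have hn : ((n : ℝ) + 1) ≠ 0 := by positivity
    field_simp
    ring
  rw [heq] at hs2
  have : (∑' n : ℕ, x ^ n / ((n : ℝ) + 1)) = -Real.log (1 - x) / x := by
    rw [hs2.tsum_eq, inv_mul_eq_div]
  rwa [this] at h

noncomputable def Bfn (a u t : ℝ) : ℝ := (u + t - u * t - a) / (1 - a)

noncomputable def Gfn (a u t : ℝ) : ℝ :=
  Li2 (a * Bfn a u t / (u * t)) + Li2 (Bfn a u t) + Li2 (u / Bfn a u t)
    + Li2 (t / Bfn a u t)
    + Real.log (u / Bfn a u t) * Real.log (t / Bfn a u t) - Li2 t - Li2 (a / t)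

lemma hasDerivAt_Gfn {a u t : ℝ} (ha : 0 < a) (hau : a < u) (hu1 : u < 1)
    (hat : a < t) (ht1 : t < 1) : HasDerivAt (Gfn a u) 0 t := by
  have h1a : (0:ℝ) < 1 - a := by linarith
  have ht0 : 0 < t := ha.trans hat
  have hu0 : 0 < u := ha.trans hau
  set b := Bfn a u t with hbdef
  have hb : b * (1 - a) = u + t - u * t - a := by
    rw [hbdef, Bfn, div_mul_cancel₀ _ h1a.ne']
  have hub : u < b := by
    rw [hbdef, Bfn, lt_div_iff₀ h1a]; nlinarith
  have htb : t < b := by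
    rw [hbdef, Bfn, lt_div_iff₀ h1a]; nlinarith
  have hb1 : b < 1 := by
    rw [hbdef, Bfn, div_lt_one h1a]; nlinarith
  have hb0 : 0 < b := hu0.trans hub
  have hP1 : (b - u) * (b - t) = (1 - b) * (u * t - a * b) := by
    linear_combination b * hb
  have hP2 : (u * t - a * b) * (1 - t) = (b - t) * (t - a) := by
    linear_combination (-t) * hb
  have habut : a * b < u * t := by
    nlinarith [mul_pos (sub_pos.2 htb) (sub_pos.2 hat)]
  have hut0 : (0:ℝ) < u * t := mul_pos hu0 ht0
  have hutne : u * t ≠ 0 := hut0.ne'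
  have hbne : b ≠ 0 := hb0.ne'
  -- derivative of B
  have hB' : HasDerivAt (Bfn a u) ((1 - u) / (1 - a)) t := by
    have h0 : HasDerivAt (fun s : ℝ => u + s - u * s - a) (1 - u) t := by
      have := (((hasDerivAt_id t).const_add u).sub ((hasDerivAt_id t).const_mul u)).sub_const a
      refine this.congr_deriv ?_
      ring
    exact h0.div_const (1 - a)
  -- positivity of the Li2 arguments
  have hz1 : 0 < a * b / (u * t) := by positivity
  have hz1' : a * b / (u * t) < 1 := (div_lt_one hut0).mpr habut
  have hz3 : 0 < u / b := by positivity
  have hz3' : u / b < 1 := (div_lt_one hb0).mpr hub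
  have hz4 : 0 < t / b := by positivity
  have hz4' : t / b < 1 := (div_lt_one hb0).mpr htb
  have hz7 : 0 < a / t := by positivity
  have hz7' : a / t < 1 := (div_lt_one ht0).mpr hat
  -- individual derivatives
  have hd1 : HasDerivAt (fun s => Li2 (a * Bfn a u s / (u * s)))
      ((-Real.log (1 - a * b / (u * t)) / (a * b / (u * t))) *
        ((a * ((1 - u) / (1 - a)) * (u * t) - a * b * (u * 1)) / (u * t) ^ 2)) t :=
    by have := (li2_hasDerivAt' hz1 hz1').comp t ((hB'.const_mul a).div ((hasDerivAt_id t).const_mul u) hutne); exact this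
  have hd2 : HasDerivAt (fun s => Li2 (Bfn a u s))
      ((-Real.log (1 - b) / b) * ((1 - u) / (1 - a))) t :=
    by have := (li2_hasDerivAt' hb0 hb1).comp t hB'; exact this
  have hd3 : HasDerivAt (fun s => Li2 (u / Bfn a u s))
      ((-Real.log (1 - u / b) / (u / b)) * ((0 * b - u * ((1 - u) / (1 - a))) / b ^ 2)) t :=
    by have := (li2_hasDerivAt' hz3 hz3').comp t ((hasDerivAt_const t u).div hB' hbne); exact this
  have hd4 : HasDerivAt (fun s => Li2 (s / Bfn a u s))
      ((-Real.log (1 - t / b) / (t / b)) * ((1 * b - t * ((1 - u) / (1 - a))) / b ^ 2)) t :=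
    by have := (li2_hasDerivAt' hz4 hz4').comp t ((hasDerivAt_id t).div hB' hbne); exact this
  have hd5 : HasDerivAt (fun s => Real.log (u / Bfn a u s) * Real.log (s / Bfn a u s))
      ((((0 * b - u * ((1 - u) / (1 - a))) / b ^ 2) / (u / b)) * Real.log (t / b)
        + Real.log (u / b) * (((1 * b - t * ((1 - u) / (1 - a))) / b ^ 2) / (t / b))) t :=
    ((((hasDerivAt_const t u).div hB' hbne).log hz3.ne').mul
      (((hasDerivAt_id t).div hB' hbne).log hz4.ne'))
  have hd6 : HasDerivAt (fun s => Li2 s) (-Real.log (1 - t) / t) t := li2_hasDerivAt' ht0 ht1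
  have hd7 : HasDerivAt (fun s => Li2 (a / s))
      ((-Real.log (1 - a / t) / (a / t)) * ((0 * t - a * 1) / t ^ 2)) t :=
    (li2_hasDerivAt' hz7 hz7').comp t ((hasDerivAt_const t a).div (hasDerivAt_id t) ht0.ne')
  have hG := (((((hd1.add hd2).add hd3).add hd4).add hd5).sub hd6).sub hd7
  -- the total derivative vanishes
  have hfinal :
      (((((-Real.log (1 - a * b / (u * t)) / (a * b / (u * t))) *
        ((a * ((1 - u) / (1 - a)) * (u * t) - a * b * (u * 1)) / (u * t) ^ 2)
      + (-Real.log (1 - b) / b) * ((1 - u) / (1 - a)))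
      + (-Real.log (1 - u / b) / (u / b)) * ((0 * b - u * ((1 - u) / (1 - a))) / b ^ 2))
      + (-Real.log (1 - t / b) / (t / b)) * ((1 * b - t * ((1 - u) / (1 - a))) / b ^ 2))
      + ((((0 * b - u * ((1 - u) / (1 - a))) / b ^ 2) / (u / b)) * Real.log (t / b)
        + Real.log (u / b) * (((1 * b - t * ((1 - u) / (1 - a))) / b ^ 2) / (t / b))))
      - (-Real.log (1 - t) / t)
      - (-Real.log (1 - a / t) / (a / t)) * ((0 * t - a * 1) / t ^ 2) = 0 := by
    have e1 : Real.log (1 - a * b / (u * t))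
        = Real.log (u * t - a * b) - Real.log u - Real.log t := by
      rw [show 1 - a * b / (u * t) = (u * t - a * b) / (u * t) by field_simp,
        Real.log_div (sub_pos.2 habut).ne' hutne, Real.log_mul hu0.ne' ht0.ne']
      ring
    have e2 : Real.log (1 - u / b) = Real.log (b - u) - Real.log b := by
      rw [show 1 - u / b = (b - u) / b by field_simp,
        Real.log_div (sub_pos.2 hub).ne' hbne]
    have e3 : Real.log (1 - t / b) = Real.log (b - t) - Real.log b := by
      rw [show 1 - t / b = (b - t) / b by field_simp,
        Real.log_div (sub_pos.2 htb).ne' hbne]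
    have e4 : Real.log (1 - a / t) = Real.log (t - a) - Real.log t := by
      rw [show 1 - a / t = (t - a) / t by field_simp,
        Real.log_div (sub_pos.2 hat).ne' ht0.ne']
    have e5 : Real.log (u / b) = Real.log u - Real.log b := Real.log_div hu0.ne' hbne
    have e6 : Real.log (t / b) = Real.log t - Real.log b := Real.log_div ht0.ne' hbne
    have q1 : Real.log (b - u) + Real.log (b - t)
        = Real.log (1 - b) + Real.log (u * t - a * b) := by
      rw [← Real.log_mul (sub_pos.2 hub).ne' (sub_pos.2 htb).ne',
        ← Real.log_mul (sub_pos.2 hb1).ne' (sub_pos.2 habut).ne', hP1]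
    have q2 : Real.log (u * t - a * b) + Real.log (1 - t)
        = Real.log (b - t) + Real.log (t - a) := by
      rw [← Real.log_mul (sub_pos.2 habut).ne' (sub_pos.2 ht1).ne',
        ← Real.log_mul (sub_pos.2 htb).ne' (sub_pos.2 hat).ne', hP2]
    rw [e1, e2, e3, e4, e5, e6]
    have hane : a ≠ 0 := ha.ne'
    have h1ane : (1:ℝ) - a ≠ 0 := h1a.ne'
    have htne : t ≠ 0 := ht0.ne'
    have hune : u ≠ 0 := hu0.ne'
    linear_combination (norm := (field_simp; ring))
      (((1 - u) / (1 - a)) / b) * q1 + (1 / t) * q2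
  exact hfinal ▸ hG

lemma Bfn_bounds {a u v : ℝ} (ha : 0 < a) (hau : a < u) (hu1 : u < 1)
    (hav : a < v) {t : ℝ} (ht : t ∈ Set.Icc v 1) :
    u ≤ Bfn a u t ∧ t ≤ Bfn a u t ∧ Bfn a u t ≤ 1 ∧ a * Bfn a u t ≤ u * t := by
  have h1a : (0:ℝ) < 1 - a := by linarith
  have hat : a < t := hav.trans_le ht.1
  have ht1 : t ≤ 1 := ht.2
  refine ⟨?_, ?_, ?_, ?_⟩
  · rw [Bfn, le_div_iff₀ h1a]; nlinarith
  · rw [Bfn, le_div_iff₀ h1a]; nlinarith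
  · rw [Bfn, div_le_one h1a]; nlinarith
  · rw [Bfn, ← mul_div_assoc, div_le_iff₀ h1a]; nlinarith

lemma mantel {a u v b : ℝ} (ha : 0 < a) (hau : a < u) (hu1 : u < 1)
    (hav : a < v) (hv1 : v < 1) (hb : b * (1 - a) = u + v - u * v - a) :
    Li2 (a * b / (u * v)) + Li2 b + Li2 (u / b) + Li2 (v / b)
      + Real.log (u / b) * Real.log (v / b) - Li2 v - Li2 (a / v)
      = Real.pi ^ 2 / 6 + Li2 u + Li2 (a / u) - Li2 a := by
  have h1a : (0:ℝ) < 1 - a := by linarith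
  have hu0 : 0 < u := ha.trans hau
  have hv0 : 0 < v := ha.trans hav
  have hbB : b = Bfn a u v := by
    rw [Bfn, eq_div_iff h1a.ne']; exact hb
  have hBc : Continuous (Bfn a u) := by
    show Continuous fun t : ℝ => (u + t - u * t - a) / (1 - a)
    fun_prop
  -- continuity of Gfn on [v, 1]
  have hBpos : ∀ t ∈ Set.Icc v 1, 0 < Bfn a u t := fun t ht =>
    hu0.trans_le (Bfn_bounds ha hau hu1 hav ht).1
  have htpos : ∀ t ∈ Set.Icc v 1, 0 < t := fun t ht => hv0.trans_le ht.1
  have hmem : ∀ z : ℝ, 0 ≤ z → z ≤ 1 → z ∈ Set.Icc (-1:ℝ) 1 :=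
    fun z h0 h1 => ⟨by linarith, h1⟩
  have hcont : ContinuousOn (Gfn a u) (Set.Icc v 1) := by
    show ContinuousOn (fun t : ℝ => Li2 (a * Bfn a u t / (u * t)) + Li2 (Bfn a u t)
      + Li2 (u / Bfn a u t) + Li2 (t / Bfn a u t)
      + Real.log (u / Bfn a u t) * Real.log (t / Bfn a u t) - Li2 t - Li2 (a / t)) _
    have c1 : ContinuousOn (fun t : ℝ => a * Bfn a u t / (u * t)) (Set.Icc v 1) :=
      ContinuousOn.div (by fun_prop) (by fun_prop)
        (fun t ht => (mul_pos hu0 (htpos t ht)).ne')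
    have c2 : ContinuousOn (fun t : ℝ => u / Bfn a u t) (Set.Icc v 1) :=
      ContinuousOn.div continuousOn_const hBc.continuousOn
        (fun t ht => (hBpos t ht).ne')
    have c3 : ContinuousOn (fun t : ℝ => t / Bfn a u t) (Set.Icc v 1) :=
      ContinuousOn.div continuousOn_id hBc.continuousOn
        (fun t ht => (hBpos t ht).ne')
    have c4 : ContinuousOn (fun t : ℝ => a / t) (Set.Icc v 1) :=
      ContinuousOn.div continuousOn_const continuousOn_id
        (fun t ht => (htpos t ht).ne')
    refine ((((((li2_continuousOn.comp c1 ?_).add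
      (li2_continuousOn.comp hBc.continuousOn ?_)).add
      (li2_continuousOn.comp c2 ?_)).add
      (li2_continuousOn.comp c3 ?_)).add
      ((c2.log fun t ht => (div_pos hu0 (hBpos t ht)).ne').mul
        (c3.log fun t ht => (div_pos (htpos t ht) (hBpos t ht)).ne'))).sub
      (li2_continuousOn.comp continuousOn_id ?_)).sub
      (li2_continuousOn.comp c4 ?_)
    · intro t ht
      obtain ⟨h1, h2, h3, h4⟩ := Bfn_bounds ha hau hu1 hav ht
      exact hmem _ (div_nonneg (mul_nonneg ha.le (hBpos t ht).le)
        (mul_pos hu0 (htpos t ht)).le) ((div_le_one (mul_pos hu0 (htpos t ht))).mpr h4)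
    · intro t ht
      obtain ⟨h1, h2, h3, h4⟩ := Bfn_bounds ha hau hu1 hav ht
      exact hmem _ (le_of_lt (hBpos t ht)) h3
    · intro t ht
      obtain ⟨h1, h2, h3, h4⟩ := Bfn_bounds ha hau hu1 hav ht
      exact hmem _ (div_nonneg hu0.le (hBpos t ht).le) ((div_le_one (hBpos t ht)).mpr h1)
    · intro t ht
      obtain ⟨h1, h2, h3, h4⟩ := Bfn_bounds ha hau hu1 hav ht
      exact hmem _ (div_nonneg (htpos t ht).le (hBpos t ht).le)
        ((div_le_one (hBpos t ht)).mpr h2)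
    · intro t ht
      exact hmem _ (le_of_lt (htpos t ht)) ht.2
    · intro t ht
      exact hmem _ (div_nonneg ha.le (htpos t ht).le)
        ((div_le_one (htpos t ht)).mpr (hav.trans_le ht.1).le)
  have hderiv : ∀ t ∈ Set.Ico v 1, HasDerivWithinAt (Gfn a u) 0 (Set.Ici t) t :=
    fun t ht =>
      (hasDerivAt_Gfn ha hau hu1 (hav.trans_le ht.1) ht.2).hasDerivWithinAt
  have hkey := constant_of_has_deriv_right_zero hcont hderiv 1
    (Set.right_mem_Icc.mpr hv1.le)
  -- hkey : Gfn a u 1 = Gfn a u v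
  have hB1 : Bfn a u 1 = 1 := by
    rw [Bfn, div_eq_one_iff_eq h1a.ne']; ring
  have hG1 : Gfn a u 1 = Real.pi ^ 2 / 6 + Li2 u + Li2 (a / u) - Li2 a := by
    rw [Gfn, hB1]
    simp only [mul_one, div_one, Real.log_one, mul_zero]
    rw [li2_one]
    ring
  have hGv : Gfn a u v = Li2 (a * b / (u * v)) + Li2 b + Li2 (u / b) + Li2 (v / b)
      + Real.log (u / b) * Real.log (v / b) - Li2 v - Li2 (a / v) := by
    rw [Gfn, ← hbB]
  rw [← hGv, ← hkey, hG1]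

/-- The dilogarithm identity at `δ = h_β(x,y)`, and in particular the vanishing of the
rate function at its critical point: `a_β(x,y; h_β(x,y)) = 0`. -/
theorem hFn_dilog_identity (β x y : ℝ) (hβ : 0 < β)
    (hx : x ∈ Set.Ioo (0:ℝ) 1) (hy : y ∈ Set.Ioo (0:ℝ) 1) :
    (Li2 (Real.exp (-β * (1 - x - y + hFn β x y)))
      = Real.pi ^ 2 / 6 - β ^ 2 * (x - hFn β x y) * (y - hFn β x y)
        - Li2 (Real.exp (-β * hFn β x y))
        - Li2 (Real.exp (-β * (x - hFn β x y)))
        - Li2 (Real.exp (-β * (y - hFn β x y)))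
        - Li2 (Real.exp (-β))
        + Li2 (Real.exp (-β * x)) + Li2 (Real.exp (-β * y))
        + Li2 (Real.exp (-β * (1 - x))) + Li2 (Real.exp (-β * (1 - y)))) ∧
    rateFn β x y (hFn β x y) = 0 := by
  obtain ⟨hx0, hx1⟩ := hx
  obtain ⟨hy0, hy1⟩ := hy
  set δ := hFn β x y with hδdef
  set a := Real.exp (-β) with hadef
  set u := Real.exp (-β * x) with hudef
  set v := Real.exp (-β * y) with hvdef
  set b := Real.exp (-β * δ) with hbdef
  have ha : 0 < a := Real.exp_pos _
  have hu0 : 0 < u := Real.exp_pos _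
  have hv0 : 0 < v := Real.exp_pos _
  have hau : a < u := Real.exp_lt_exp.mpr (by nlinarith)
  have hav : a < v := Real.exp_lt_exp.mpr (by nlinarith)
  have hu1 : u < 1 := Real.exp_lt_one_iff.mpr (by nlinarith)
  have hv1 : v < 1 := Real.exp_lt_one_iff.mpr (by nlinarith)
  have h1a : (0:ℝ) < 1 - a := by linarith
  have huv : Real.exp (-β * (x + y)) = u * v := by
    rw [hudef, hvdef, ← Real.exp_add]; ring_nf
  have hnum : (0:ℝ) < u + v - u * v - a := by
    nlinarith [mul_pos (sub_pos.2 hu1) (sub_pos.2 hv1)]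
  have hδval : -β * δ = Real.log ((u + v - u * v - a) / (1 - a)) := by
    rw [hδdef, hFn, huv, Real.log_div hnum.ne' h1a.ne', ← hadef, ← hudef, ← hvdef]
    field_simp
    ring
  have hbeq : b = (u + v - u * v - a) / (1 - a) := by
    rw [hbdef, hδval, Real.exp_log (div_pos hnum h1a)]
  have hb0 : 0 < b := Real.exp_pos _
  have hbrel : b * (1 - a) = u + v - u * v - a := by
    rw [hbeq, div_mul_cancel₀ _ h1a.ne']
  have E1 : Real.exp (-β * (1 - x - y + δ)) = a * b / (u * v) := by
    rw [show -β * (1 - x - y + δ) = ((-β) + (-β * δ)) - ((-β * x) + (-β * y)) by ring,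
      Real.exp_sub, Real.exp_add, Real.exp_add]
  have E2 : Real.exp (-β * (x - δ)) = u / b := by
    rw [show -β * (x - δ) = (-β * x) - (-β * δ) by ring, Real.exp_sub]
  have E3 : Real.exp (-β * (y - δ)) = v / b := by
    rw [show -β * (y - δ) = (-β * y) - (-β * δ) by ring, Real.exp_sub]
  have E4 : Real.exp (-β * (1 - x)) = a / u := by
    rw [show -β * (1 - x) = (-β) - (-β * x) by ring, Real.exp_sub]
  have E5 : Real.exp (-β * (1 - y)) = a / v := by
    rw [show -β * (1 - y) = (-β) - (-β * y) by ring, Real.exp_sub]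
  have E6 : β ^ 2 * (x - δ) * (y - δ) = Real.log (u / b) * Real.log (v / b) := by
    rw [← E2, ← E3, Real.log_exp, Real.log_exp]
    ring
  have M := mantel ha hau hu1 hav hv1 hbrel
  have part1 : Li2 (Real.exp (-β * (1 - x - y + δ)))
      = Real.pi ^ 2 / 6 - β ^ 2 * (x - δ) * (y - δ)
        - Li2 (Real.exp (-β * δ)) - Li2 (Real.exp (-β * (x - δ)))
        - Li2 (Real.exp (-β * (y - δ))) - Li2 (Real.exp (-β))
        + Li2 (Real.exp (-β * x)) + Li2 (Real.exp (-β * y))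
        + Li2 (Real.exp (-β * (1 - x))) + Li2 (Real.exp (-β * (1 - y))) := by
    rw [E1, E2, E3, E4, E5, E6, ← hadef, ← hudef, ← hvdef, ← hbdef]
    linarith [M]
  refine ⟨part1, ?_⟩
  rw [rateFn]
  exact mul_eq_zero_of_right _ (by linarith [part1])
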